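/- For every temporal K-element 𝒯, K-coalescing is idempotent: coal(coal(𝒯)) = coal(𝒯). -/
import Mathlib


open scoped Classical

namespace TemporalK

variable {K : Type*}

/-- An interval over the time domain `{0, ..., N-1}`: a pair `(b, e)` with `b < e ≤ N`. -/
abbrev TInterval (N : ℕ) := {I : Fin (N + 1) × Fin (N + 1) // I.1 < I.2}

/-- A temporal `K`-element: a function assigning to each interval an element of `K`. -/
abbrev TempEl (N : ℕ) (K : Type*) := TInterval N → K

/-- The interval `I = (b, e)` contains the time point `T` iff `b ≤ T < e`. -/
def Contains {N : ℕ} (I : TInterval N) (T : ℕ) : Prop :=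
  (I.val.1 : ℕ) ≤ T ∧ T < (I.val.2 : ℕ)

/-- The timeslice of `𝒯` at time point `T`: the sum of `𝒯 I` over all intervals `I`
containing `T`. -/
noncomputable def slice {N : ℕ} [CommSemiring K] (𝒯 : TempEl N K) (T : ℕ) : K :=
  ∑ I ∈ Finset.univ.filter (fun I : TInterval N => Contains I T), 𝒯 I

/-- `T` is an (annotation) changepoint of `𝒯` iff `T = 0` or the timeslices at `T - 1`
and `T` differ. -/
def Changepoint {N : ℕ} [CommSemiring K] (𝒯 : TempEl N K) (T : ℕ) : Prop :=
  T = 0 ∨ slice 𝒯 (T - 1) ≠ slice 𝒯 T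

/-- `I = (b, e)` is a changepoint interval of `𝒯` iff `b` is a changepoint, `e` is a
changepoint or equals `N`, and no time point strictly between `b` and `e` is a changepoint. -/
def CPInterval {N : ℕ} [CommSemiring K] (𝒯 : TempEl N K) (I : TInterval N) : Prop :=
  Changepoint 𝒯 (I.val.1 : ℕ) ∧
    (Changepoint 𝒯 (I.val.2 : ℕ) ∨ (I.val.2 : ℕ) = N) ∧
    ∀ T : ℕ, (I.val.1 : ℕ) < T → T < (I.val.2 : ℕ) → ¬ Changepoint 𝒯 T

/-- `K`-coalescing: maps changepoint intervals `(b, e)` to the timeslice at `b` and all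
other intervals to `0`. -/
noncomputable def coal {N : ℕ} [CommSemiring K] (𝒯 : TempEl N K) : TempEl N K :=
  fun I => if CPInterval 𝒯 I then slice 𝒯 (I.val.1 : ℕ) else 0

/-- Snapshot equivalence: equal timeslices at every time point. -/
def SnapEq {N : ℕ} [CommSemiring K] (k k' : TempEl N K) : Prop :=
  ∀ T : ℕ, T < N → slice k T = slice k' T

/-- A temporal `K`-element is coalesced iff it is the `K`-coalescing of some
temporal `K`-element. -/
def Coalesced {N : ℕ} [CommSemiring K] (k : TempEl N K) : Prop :=
  ∃ 𝒯 : TempEl N K, k = coal 𝒯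

/-- Pointwise addition of temporal `K`-elements. -/
def padd {N : ℕ} [CommSemiring K] (k k' : TempEl N K) : TempEl N K :=
  fun I => k I + k' I

/-- Pointwise multiplication of temporal `K`-elements:
`(k ·_P k')(I) = Σ k(I')·k'(I'')` over all pairs `(I', I'')` whose intersection is
nonempty and equals `I`. -/
noncomputable def pmul {N : ℕ} [CommSemiring K] (k k' : TempEl N K) : TempEl N K :=
  fun I =>
    ∑ p ∈ Finset.univ.filter (fun p : TInterval N × TInterval N =>
        max (p.1.val.1 : ℕ) (p.2.val.1 : ℕ) < min (p.1.val.2 : ℕ) (p.2.val.2 : ℕ) ∧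
        (I.val.1 : ℕ) = max (p.1.val.1 : ℕ) (p.2.val.1 : ℕ) ∧
        (I.val.2 : ℕ) = min (p.1.val.2 : ℕ) (p.2.val.2 : ℕ)),
      k p.1 * k' p.2

/-- Addition of the period semiring: coalesced pointwise addition. -/
noncomputable def tadd {N : ℕ} [CommSemiring K] (k k' : TempEl N K) : TempEl N K :=
  coal (padd k k')

/-- Multiplication of the period semiring: coalesced pointwise multiplication. -/
noncomputable def tmul {N : ℕ} [CommSemiring K] (k k' : TempEl N K) : TempEl N K :=
  coal (pmul k k')

/-- The zero of the period semiring: maps every interval to `0`. -/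
def zeroT (N : ℕ) (K : Type*) [CommSemiring K] : TempEl N K := fun _ => 0

/-- The one of the period semiring: maps the interval `(0, N)` to `1` and every other
interval to `0`. -/
def oneT (N : ℕ) (K : Type*) [CommSemiring K] : TempEl N K :=
  fun I => if (I.val.1 : ℕ) = 0 ∧ (I.val.2 : ℕ) = N then 1 else 0

/-- Encoding of an annotation history `f : time points → K` as a coalesced temporal
`K`-element: coalesce the element assigning `f T` to each singleton interval `(T, T+1)`. -/
noncomputable def enc {N : ℕ} [CommSemiring K] (f : Fin N → K) : TempEl N K :=
  coal (fun I =>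
    if h : (I.val.2 : ℕ) = (I.val.1 : ℕ) + 1 then
      f ⟨(I.val.1 : ℕ), by have := I.val.2.isLt; omega⟩
    else 0)

/-- The natural preorder of the semiring `K`. -/
def nle [CommSemiring K] (a b : K) : Prop := ∃ c, a + c = b

/-- The natural preorder of the period semiring (on coalesced temporal `K`-elements). -/
def tle {N : ℕ} [CommSemiring K] (k k' : TempEl N K) : Prop :=
  ∃ k'' : TempEl N K, Coalesced k'' ∧ tadd k k'' = k'

/-- The pointwise monus: assigns `τ_T(k) −_K τ_T(k')` to each singleton interval
`(T, T+1)` and `0` to every non-singleton interval. -/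
noncomputable def pmonus {N : ℕ} [CommSemiring K] (monus : K → K → K)
    (k k' : TempEl N K) : TempEl N K :=
  fun I =>
    if (I.val.2 : ℕ) = (I.val.1 : ℕ) + 1 then
      monus (slice k (I.val.1 : ℕ)) (slice k' (I.val.1 : ℕ))
    else 0

/-- The monus of the period semiring: coalesced pointwise monus. -/
noncomputable def tmonus {N : ℕ} [CommSemiring K] (monus : K → K → K)
    (k k' : TempEl N K) : TempEl N K :=
  coal (pmonus monus k k')

end TemporalK

open TemporalK

section CoalAux
variable {K : Type*}

private lemma slice_const' {N : ℕ} [CommSemiring K] (𝒯 : TempEl N K) :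
    ∀ T b, b ≤ T → (∀ S, b < S → S ≤ T → ¬Changepoint 𝒯 S) →
      slice 𝒯 T = slice 𝒯 b := by
  intro T
  induction T with
  | zero => intro b hb _; interval_cases b; rfl
  | succ T ih =>
    intro b hb h
    rcases Nat.eq_or_lt_of_le hb with rfl | hlt
    · rfl
    · have hnc := h (T + 1) hlt le_rfl
      rw [Changepoint] at hnc
      push_neg at hnc
      have heq : slice 𝒯 T = slice 𝒯 (T + 1) := by simpa using hnc.2
      rw [← heq]
      exact ih b (by omega) (fun S h1 h2 => h S h1 (by omega))

private lemma cp_zero {N : ℕ} [CommSemiring K] (𝒯 : TempEl N K) : Changepoint 𝒯 0 :=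
  Or.inl rfl

private lemma exists_cp {N : ℕ} [CommSemiring K] (𝒯 : TempEl N K) (T : ℕ) (hT : T < N) :
    ∃ I : TInterval N, Contains I T ∧ CPInterval 𝒯 I := by
  classical
  set b := Nat.findGreatest (fun S => Changepoint 𝒯 S) T with hbdef
  have hbT : b ≤ T := Nat.findGreatest_le T
  have hb_cp : Changepoint 𝒯 b :=
    Nat.findGreatest_spec (Nat.zero_le T) (cp_zero 𝒯)
  have hbgr : ∀ S, b < S → S ≤ T → ¬Changepoint 𝒯 S := fun S h1 h2 =>
    Nat.findGreatest_is_greatest h1 h2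
  have heN : ∃ S, T < S ∧ (Changepoint 𝒯 S ∨ S = N) := ⟨N, hT, Or.inr rfl⟩
  set e := Nat.find heN with hedef
  have he := Nat.find_spec heN
  have heT : T < e := he.1
  have heN' : e ≤ N := Nat.find_min' heN ⟨hT, Or.inr rfl⟩
  have hemin : ∀ S, S < e → ¬(T < S ∧ (Changepoint 𝒯 S ∨ S = N)) := fun S h =>
    Nat.find_min heN h
  refine ⟨⟨(⟨b, by omega⟩, ⟨e, by omega⟩), by simp [Fin.lt_def]; omega⟩,
    ⟨by simpa using hbT, by simpa using heT⟩, ?_, ?_, ?_⟩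
  · simpa using hb_cp
  · simpa using he.2
  · intro S h1 h2
    simp only at h1 h2
    rcases le_or_gt S T with hle | hgt
    · exact hbgr S h1 hle
    · intro hc
      exact hemin S h2 ⟨hgt, Or.inl hc⟩

private lemma unique_cp {N : ℕ} [CommSemiring K] (𝒯 : TempEl N K) (T : ℕ)
    {I J : TInterval N} (hI : Contains I T ∧ CPInterval 𝒯 I)
    (hJ : Contains J T ∧ CPInterval 𝒯 J) : I = J := by
  obtain ⟨⟨hIb, hIe⟩, hIcp⟩ := hI
  obtain ⟨⟨hJb, hJe⟩, hJcp⟩ := hJ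
  have hb : (I.val.1 : ℕ) = (J.val.1 : ℕ) := by
    by_contra hne
    rcases Nat.lt_or_ge (I.val.1 : ℕ) (J.val.1 : ℕ) with h | h
    · exact hIcp.2.2 _ h (by omega) hJcp.1
    · exact hJcp.2.2 _ (by omega) (by omega) hIcp.1
  have he : (I.val.2 : ℕ) = (J.val.2 : ℕ) := by
    by_contra hne
    rcases Nat.lt_or_ge (I.val.2 : ℕ) (J.val.2 : ℕ) with h | h
    · have := hJcp.2.2 (I.val.2 : ℕ) (by omega) h
      rcases hIcp.2.1 with hc | hc
      · exact this hc
      · have : (J.val.2 : ℕ) ≤ N := by omega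
        omega
    · have h' : (J.val.2 : ℕ) < (I.val.2 : ℕ) := by omega
      have := hIcp.2.2 (J.val.2 : ℕ) (by omega) h'
      rcases hJcp.2.1 with hc | hc
      · exact this hc
      · have : (I.val.2 : ℕ) ≤ N := by omega
        omega
  apply Subtype.ext
  apply Prod.ext <;> apply Fin.ext
  · exact hb
  · exact he

private lemma slice_coal {N : ℕ} [CommSemiring K] (𝒯 : TempEl N K) (T : ℕ) (hT : T < N) :
    slice (coal 𝒯) T = slice 𝒯 T := by
  classical
  obtain ⟨I₀, hI₀⟩ := exists_cp 𝒯 T hT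
  have hsingle : Finset.univ.filter
      (fun I : TInterval N => Contains I T ∧ CPInterval 𝒯 I) = {I₀} := by
    ext J
    simp only [Finset.mem_filter, Finset.mem_univ, true_and, Finset.mem_singleton]
    constructor
    · intro hJ; exact unique_cp 𝒯 T hJ hI₀
    · rintro rfl; exact hI₀
  have step : slice (coal 𝒯) T = ∑ I ∈ (Finset.univ.filter
      (fun I : TInterval N => Contains I T)).filter (fun I => CPInterval 𝒯 I),
      slice 𝒯 (I.val.1 : ℕ) := by
    simp only [TemporalK.slice, coal]
    exact (Finset.sum_filter _ _).symm
  rw [step, Finset.filter_filter, hsingle, Finset.sum_singleton]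
  exact (slice_const' 𝒯 T (I₀.val.1 : ℕ) hI₀.1.1
    (fun S h1 h2 => hI₀.2.2.2 S h1 (lt_of_le_of_lt h2 hI₀.1.2))).symm

private lemma cp_coal_iff {N : ℕ} [CommSemiring K] (𝒯 : TempEl N K) (T : ℕ) (hT : T < N) :
    Changepoint (coal 𝒯) T ↔ Changepoint 𝒯 T := by
  unfold Changepoint
  rw [slice_coal 𝒯 T hT, slice_coal 𝒯 (T - 1) (by omega)]

private lemma cpi_coal_iff {N : ℕ} [CommSemiring K] (𝒯 : TempEl N K) (I : TInterval N) :
    CPInterval (coal 𝒯) I ↔ CPInterval 𝒯 I := by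
  have h1 : (I.val.1 : ℕ) < (I.val.2 : ℕ) := I.prop
  have h2 : (I.val.2 : ℕ) ≤ N := by have := I.val.2.isLt; omega
  have hb : (I.val.1 : ℕ) < N := by omega
  have hiff2 : (Changepoint (coal 𝒯) (I.val.2 : ℕ) ∨ (I.val.2 : ℕ) = N) ↔
      (Changepoint 𝒯 (I.val.2 : ℕ) ∨ (I.val.2 : ℕ) = N) := by
    rcases eq_or_lt_of_le h2 with h | h
    · simp [h]
    · rw [cp_coal_iff 𝒯 _ h]
  unfold CPInterval
  rw [cp_coal_iff 𝒯 _ hb, hiff2]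
  constructor <;> rintro ⟨a, b, c⟩ <;> refine ⟨a, b, fun T hT1 hT2 hc => c T hT1 hT2 ?_⟩
  · exact (cp_coal_iff 𝒯 T (by omega)).mpr hc
  · exact (cp_coal_iff 𝒯 T (by omega)).mp hc

end CoalAux

theorem coal_idempotent {N : ℕ} (hN : 1 ≤ N) {K : Type*} [CommSemiring K]
    (𝒯 : TempEl N K) :
    coal (coal 𝒯) = coal 𝒯 := by
  funext I
  have h1 : (I.val.1 : ℕ) < (I.val.2 : ℕ) := I.prop
  have hb : (I.val.1 : ℕ) < N := by have := I.val.2.isLt; omega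
  simp only [coal, cpi_coal_iff]
  by_cases h : CPInterval 𝒯 I
  · simp [h, slice_coal 𝒯 _ hb]
  · simp [h]
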